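/- Let X ∈ ℝ^{d×n} with columns x_1,…,x_n, y ∈ ℝ^n, and f_i(w) = (1/2)(y_i − x_iᵀw)². Assume X·Xᵀ is invertible and let w* = (X·Xᵀ)^{-1}·X·y. Assume ‖∇f_i(w*)‖ ≤ L_i for all i, where ∇f_i(w*) = −(y_i − x_iᵀw*)·x_i. Let {i_1,…,i_n} be a permutation of {1,…,n} and for each m let P_m = (e_{i_1},…,e_{i_m}) ∈ ℝ^{n×m}. Suppose there exists m_0 such that X·P_{m_0}·P_{m_0}ᵀ·Xᵀ has full rank d with smallest eigenvalue b > 0. Then for every m ≥ m_0, with w_m = (X·P_m·P_mᵀ·Xᵀ)^{-1}·X·P_m·P_mᵀ·y, it holds that ‖w* − w_m‖² ≤ (1/b²)·(∑_{k=m+1}^{n} L_{i_k})². -/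

import Mathlib

open Matrix

lemma normsq (d : ℕ) (v : Fin d → ℝ) :
    ‖(WithLp.equiv 2 (Fin d → ℝ)).symm v‖ ^ 2 = v ⬝ᵥ v := by
  rw [EuclideanSpace.norm_eq, Real.sq_sqrt (by positivity)]
  simp [dotProduct, sq]

lemma cs (d : ℕ) (v w : Fin d → ℝ) :
    v ⬝ᵥ w ≤ ‖(WithLp.equiv 2 (Fin d → ℝ)).symm v‖ * ‖(WithLp.equiv 2 (Fin d → ℝ)).symm w‖ := by
  have h := real_inner_le_norm ((WithLp.equiv 2 (Fin d → ℝ)).symm v) ((WithLp.equiv 2 (Fin d → ℝ)).symm w)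
  rw [PiLp.inner_apply] at h
  simpa [dotProduct, mul_comm] using h

lemma quadP {n m d : ℕ} (hm : m ≤ n) (X : Matrix (Fin d) (Fin n) ℝ)
    (σ : Equiv.Perm (Fin n)) (Pm : Matrix (Fin n) (Fin m) ℝ)
    (hP : ∀ i j, Pm i j = if i = σ (Fin.castLE hm j) then 1 else 0)
    (v : Fin d → ℝ) (w : Fin n → ℝ) :
    v ⬝ᵥ ((X * Pm * Pmᵀ) *ᵥ w) =
      ∑ j : Fin m, (Xᵀ *ᵥ v) (σ (Fin.castLE hm j)) * w (σ (Fin.castLE hm j)) := by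
  have hPt : ∀ (r : Fin n → ℝ) (j : Fin m), (Pmᵀ *ᵥ r) j = r (σ (Fin.castLE hm j)) := by
    intro r j
    simp [Matrix.mulVec, dotProduct, hP, Matrix.transpose_apply, ite_mul]
  have h1 : (X * Pm * Pmᵀ) *ᵥ w = X *ᵥ (Pm *ᵥ (Pmᵀ *ᵥ w)) := by
    rw [Matrix.mulVec_mulVec, Matrix.mulVec_mulVec]
  rw [h1, Matrix.dotProduct_mulVec, ← Matrix.mulVec_transpose,
      Matrix.dotProduct_mulVec, ← Matrix.mulVec_transpose]
  simp [dotProduct, hPt]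

lemma sum_fin_eq_filter {n m : ℕ} (hm : m ≤ n) (t : Fin n → ℝ) :
    ∑ j : Fin m, t (Fin.castLE hm j) =
      ∑ k ∈ Finset.univ.filter (fun k : Fin n => (k : ℕ) < m), t k := by
  set F : ℕ → ℝ := fun j => if h : j < n then t ⟨j, h⟩ else 0 with hF
  set f : ℕ → ℝ := fun j => if j < m then F j else 0 with hf
  have e1 : ∑ j : Fin m, t (Fin.castLE hm j) = ∑ j ∈ Finset.range m, F j := by
    rw [← Fin.sum_univ_eq_sum_range]
    refine Finset.sum_congr rfl fun j _ => ?_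
    simp only [hF]
    rw [dif_pos (lt_of_lt_of_le j.isLt hm)]; rfl
  have e2 : ∑ k ∈ Finset.univ.filter (fun k : Fin n => (k : ℕ) < m), t k
      = ∑ j ∈ Finset.range n, f j := by
    rw [Finset.sum_filter, ← Fin.sum_univ_eq_sum_range]
    refine Finset.sum_congr rfl fun k _ => ?_
    simp only [hf, hF]
    by_cases h : (k : ℕ) < m
    · rw [if_pos h, if_pos h, dif_pos k.isLt]
    · rw [if_neg h, if_neg h]
  have e3 : ∑ j ∈ Finset.range m, f j = ∑ j ∈ Finset.range n, f j := by
    apply Finset.sum_subset (Finset.range_subset_range.mpr hm)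
    intro x _ hx
    simp only [hf]
    rw [if_neg (by simpa using hx)]
  have e4 : ∑ j ∈ Finset.range m, F j = ∑ j ∈ Finset.range m, f j := by
    refine Finset.sum_congr rfl fun j hj => ?_
    simp only [hf]
    rw [if_pos (Finset.mem_range.mp hj)]
  rw [e1, e2, e4, e3]

/-- Theorem 3 (Lipschitz bound) for least squares: with `‖∇f_i(w*)‖ ≤ L_i`, the squared
distance between the full least-squares solution `w*` and the subset solution `w_m` is
bounded by `(1/b²) (∑_{k=m+1}^n L_{i_k})²`. -/
theorem stmt2 (d n : ℕ)
    (X : Matrix (Fin d) (Fin n) ℝ) (y : Fin n → ℝ)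
    (f : Fin n → (Fin d → ℝ) → ℝ)
    (hf : ∀ i w, f i w = (1 / 2) * (y i - ∑ j, X j i * w j) ^ 2)
    (hXX : IsUnit (X * Xᵀ))
    (wstar : Fin d → ℝ) (hws : wstar = (X * Xᵀ)⁻¹ *ᵥ (X *ᵥ y))
    (L : Fin n → ℝ)
    (hL : ∀ i, ‖(WithLp.equiv 2 (Fin d → ℝ)).symm
        (fun j => -(y i - ∑ j', X j' i * wstar j') * X j i)‖ ≤ L i)
    (σ : Equiv.Perm (Fin n))
    (P : (m : ℕ) → m ≤ n → Matrix (Fin n) (Fin m) ℝ)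
    (hP : ∀ (m : ℕ) (hm : m ≤ n) (i : Fin n) (j : Fin m),
      P m hm i j = if i = σ (Fin.castLE hm j) then 1 else 0)
    (m₀ : ℕ) (hm₀ : m₀ ≤ n) (b : ℝ) (hb : 0 < b)
    (heig : ∀ v : Fin d → ℝ,
      b * ‖(WithLp.equiv 2 (Fin d → ℝ)).symm v‖ ^ 2 ≤
        v ⬝ᵥ ((X * P m₀ hm₀ * (P m₀ hm₀)ᵀ * Xᵀ) *ᵥ v)) :
    ∀ (m : ℕ) (hm : m ≤ n), m₀ ≤ m →
      ∀ wm : Fin d → ℝ,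
        wm = (X * P m hm * (P m hm)ᵀ * Xᵀ)⁻¹ *ᵥ ((X * P m hm * (P m hm)ᵀ) *ᵥ y) →
        ‖(WithLp.equiv 2 (Fin d → ℝ)).symm (wstar - wm)‖ ^ 2 ≤
          (1 / b ^ 2) *
            (∑ k ∈ Finset.univ.filter (fun k : Fin n => m ≤ (k : ℕ)), L (σ k)) ^ 2 := by
  intro m hm hm0m wm hwm
  have hL0 : ∀ i, 0 ≤ L i := fun i => le_trans (norm_nonneg _) (hL i)
  set Pm := P m hm with hPmdef
  have hPm : ∀ i j, Pm i j = if i = σ (Fin.castLE hm j) then 1 else 0 := hP m hm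
  -- quadratic lower bound for A_m
  have hquad : ∀ v : Fin d → ℝ,
      b * ‖(WithLp.equiv 2 (Fin d → ℝ)).symm v‖ ^ 2 ≤
        v ⬝ᵥ ((X * Pm * Pmᵀ * Xᵀ) *ᵥ v) := by
    intro v
    have h0 := heig v
    have e0 : v ⬝ᵥ ((X * P m₀ hm₀ * (P m₀ hm₀)ᵀ * Xᵀ) *ᵥ v)
        = ∑ k ∈ Finset.univ.filter (fun k : Fin n => (k : ℕ) < m₀),
            (Xᵀ *ᵥ v) (σ k) * (Xᵀ *ᵥ v) (σ k) := by
      rw [← Matrix.mulVec_mulVec, quadP hm₀ X σ _ (hP m₀ hm₀),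
        sum_fin_eq_filter hm₀ (fun k => (Xᵀ *ᵥ v) (σ k) * (Xᵀ *ᵥ v) (σ k))]
    have e1 : v ⬝ᵥ ((X * Pm * Pmᵀ * Xᵀ) *ᵥ v)
        = ∑ k ∈ Finset.univ.filter (fun k : Fin n => (k : ℕ) < m),
            (Xᵀ *ᵥ v) (σ k) * (Xᵀ *ᵥ v) (σ k) := by
      rw [← Matrix.mulVec_mulVec, quadP hm X σ _ hPm,
        sum_fin_eq_filter hm (fun k => (Xᵀ *ᵥ v) (σ k) * (Xᵀ *ᵥ v) (σ k))]
    rw [e1]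
    rw [e0] at h0
    refine le_trans h0 (Finset.sum_le_sum_of_subset_of_nonneg ?_ ?_)
    · intro k hk
      simp only [Finset.mem_filter, Finset.mem_univ, true_and] at hk ⊢
      omega
    · intro k _ _
      exact mul_self_nonneg _
  -- invertibility of A_m
  have hdet : IsUnit (X * Pm * Pmᵀ * Xᵀ).det := by
    by_contra h
    have hd : (X * Pm * Pmᵀ * Xᵀ).det = 0 := by
      by_contra h0; exact h (isUnit_iff_ne_zero.mpr h0)
    obtain ⟨v, hv0, hv⟩ := Matrix.exists_mulVec_eq_zero_iff.mpr hd
    have h1 := hquad v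
    rw [hv, dotProduct_zero] at h1
    have hVn : 0 < ‖(WithLp.equiv 2 (Fin d → ℝ)).symm v‖ := by
      rw [norm_pos_iff]
      exact fun h2 => hv0 ((WithLp.equiv 2 (Fin d → ℝ)).symm.injective h2)
    have := mul_pos hb (pow_pos hVn 2)
    linarith
  have hAm : (X * Pm * Pmᵀ * Xᵀ) *ᵥ wm = (X * Pm * Pmᵀ) *ᵥ y := by
    rw [hwm, Matrix.mulVec_mulVec, Matrix.mul_nonsing_inv _ hdet, Matrix.one_mulVec]
  -- full least squares normal equation
  have hXXdet : IsUnit (X * Xᵀ).det := (Matrix.isUnit_iff_isUnit_det _).mp hXX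
  have hAw : (X * Xᵀ) *ᵥ wstar = X *ᵥ y := by
    rw [hws, Matrix.mulVec_mulVec, Matrix.mul_nonsing_inv _ hXXdet, Matrix.one_mulVec]
  have hs0 : X *ᵥ (Xᵀ *ᵥ wstar - y) = 0 := by
    rw [Matrix.mulVec_sub, Matrix.mulVec_mulVec, hAw, sub_self]
  have htot0 : ∑ i : Fin n, (Xᵀ *ᵥ (wstar - wm)) i * (Xᵀ *ᵥ wstar - y) i = 0 := by
    have h1 : (wstar - wm) ⬝ᵥ (X *ᵥ (Xᵀ *ᵥ wstar - y))
        = (Xᵀ *ᵥ (wstar - wm)) ⬝ᵥ (Xᵀ *ᵥ wstar - y) := by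
      rw [Matrix.dotProduct_mulVec, ← Matrix.mulVec_transpose]
    rw [hs0, dotProduct_zero] at h1
    simpa [dotProduct] using h1.symm
  have htot : ∑ k : Fin n, (Xᵀ *ᵥ (wstar - wm)) (σ k) * (Xᵀ *ᵥ wstar - y) (σ k) = 0 := by
    rw [Equiv.sum_comp σ (fun i => (Xᵀ *ᵥ (wstar - wm)) i * (Xᵀ *ᵥ wstar - y) i)]
    exact htot0
  -- key identity
  have hAV : (X * Pm * Pmᵀ * Xᵀ) *ᵥ (wstar - wm) = (X * Pm * Pmᵀ) *ᵥ (Xᵀ *ᵥ wstar - y) := by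
    rw [Matrix.mulVec_sub, hAm, Matrix.mulVec_sub, Matrix.mulVec_mulVec]
  have key : (wstar - wm) ⬝ᵥ ((X * Pm * Pmᵀ * Xᵀ) *ᵥ (wstar - wm))
      = ∑ k ∈ Finset.univ.filter (fun k : Fin n => (k : ℕ) < m),
          (Xᵀ *ᵥ (wstar - wm)) (σ k) * (Xᵀ *ᵥ wstar - y) (σ k) := by
    rw [hAV, quadP hm X σ _ hPm,
      sum_fin_eq_filter hm (fun k => (Xᵀ *ᵥ (wstar - wm)) (σ k) * (Xᵀ *ᵥ wstar - y) (σ k))]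
  have hsplit := Finset.sum_filter_add_sum_filter_not Finset.univ
    (fun k : Fin n => (k : ℕ) < m)
    (fun k => (Xᵀ *ᵥ (wstar - wm)) (σ k) * (Xᵀ *ᵥ wstar - y) (σ k))
  have hfe : Finset.univ.filter (fun k : Fin n => ¬((k : ℕ) < m))
      = Finset.univ.filter (fun k : Fin n => m ≤ (k : ℕ)) := by
    apply Finset.filter_congr
    intro k _
    simp [not_lt]
  rw [hfe, htot] at hsplit
  -- per-term bound
  have hterm : ∀ i : Fin n, -((Xᵀ *ᵥ (wstar - wm)) i * (Xᵀ *ᵥ wstar - y) i)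
      ≤ ‖(WithLp.equiv 2 (Fin d → ℝ)).symm (wstar - wm)‖ * L i := by
    intro i
    have h1 : -((Xᵀ *ᵥ (wstar - wm)) i * (Xᵀ *ᵥ wstar - y) i)
        = (wstar - wm) ⬝ᵥ (fun j => (y i - ∑ j', X j' i * wstar j') * X j i) := by
      simp only [Matrix.mulVec, dotProduct, Matrix.transpose_apply, Pi.sub_apply]
      have e : ∀ j, (wstar j - wm j) * ((y i - ∑ j', X j' i * wstar j') * X j i)
          = (y i - ∑ j', X j' i * wstar j') * (X j i * (wstar j - wm j)) := fun j => by ring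
      simp only [e]
      rw [← Finset.mul_sum]
      ring
    have h2 : ‖(WithLp.equiv 2 (Fin d → ℝ)).symm
        (fun j => (y i - ∑ j', X j' i * wstar j') * X j i)‖ ≤ L i := by
      have h3 := hL i
      have hneg : (fun j => -(y i - ∑ j', X j' i * wstar j') * X j i)
          = -(fun j => (y i - ∑ j', X j' i * wstar j') * X j i) := by
        funext j; simp only [Pi.neg_apply]; ring
      rw [hneg] at h3
      rwa [show (WithLp.equiv 2 (Fin d → ℝ)).symm
          (-(fun j => (y i - ∑ j', X j' i * wstar j') * X j i))
          = -(WithLp.equiv 2 (Fin d → ℝ)).symm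
            (fun j => (y i - ∑ j', X j' i * wstar j') * X j i) from rfl, norm_neg] at h3
    rw [h1]
    exact le_trans (cs d _ _)
      (mul_le_mul_of_nonneg_left h2 (norm_nonneg _))
  -- assemble
  set N := ‖(WithLp.equiv 2 (Fin d → ℝ)).symm (wstar - wm)‖ with hN
  set S := ∑ k ∈ Finset.univ.filter (fun k : Fin n => m ≤ (k : ℕ)), L (σ k) with hS
  have hSnn : 0 ≤ S := Finset.sum_nonneg fun k _ => hL0 _
  have main : b * N ^ 2 ≤ N * S := by
    calc b * N ^ 2 ≤ (wstar - wm) ⬝ᵥ ((X * Pm * Pmᵀ * Xᵀ) *ᵥ (wstar - wm)) := hquad _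
      _ = ∑ k ∈ Finset.univ.filter (fun k : Fin n => (k : ℕ) < m),
            (Xᵀ *ᵥ (wstar - wm)) (σ k) * (Xᵀ *ᵥ wstar - y) (σ k) := key
      _ = ∑ k ∈ Finset.univ.filter (fun k : Fin n => m ≤ (k : ℕ)),
            -((Xᵀ *ᵥ (wstar - wm)) (σ k) * (Xᵀ *ᵥ wstar - y) (σ k)) := by
          rw [Finset.sum_neg_distrib]
          linarith
      _ ≤ ∑ k ∈ Finset.univ.filter (fun k : Fin n => m ≤ (k : ℕ)), N * L (σ k) :=
          Finset.sum_le_sum fun k _ => hterm (σ k)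
      _ = N * S := by rw [hS, Finset.mul_sum]
  have hNnn : 0 ≤ N := norm_nonneg _
  have hfin : b ^ 2 * N ^ 2 ≤ S ^ 2 := by nlinarith [sq_nonneg (b * N - S)]
  calc N ^ 2 = (1 / b ^ 2) * (b ^ 2 * N ^ 2) := by field_simp
    _ ≤ (1 / b ^ 2) * S ^ 2 := by
        apply mul_le_mul_of_nonneg_left hfin (by positivity)
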